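/- Let r_1,…,r_N ≥ 0. Define s_1 = Σ i·r_i, s_2 = Σ i²·r_i, s_3 = Σ i³·r_i, δ̂_1 = s_2 − s_1, δ̂_2 = s_3 − s_2. Then Σ_{i=1}^N r_i ≤ s_1 − δ̂_1²/δ̂_2 (with the convention 0/0 = 0). -/
import Mathlib


open Finset

theorem frolov_cor_upper (N : ℕ) (r : ℕ → ℝ)
    (hr : ∀ i ∈ Finset.Icc 1 N, 0 ≤ r i)
    (s₁ s₂ s₃ δ₁ δ₂ : ℝ)
    (hs₁ : s₁ = ∑ i ∈ Finset.Icc 1 N, (i : ℝ) * r i)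
    (hs₂ : s₂ = ∑ i ∈ Finset.Icc 1 N, (i : ℝ) ^ 2 * r i)
    (hs₃ : s₃ = ∑ i ∈ Finset.Icc 1 N, (i : ℝ) ^ 3 * r i)
    (hδ₁ : δ₁ = s₂ - s₁) (hδ₂ : δ₂ = s₃ - s₂) :
    ∑ i ∈ Finset.Icc 1 N, r i ≤ s₁ - δ₁ ^ 2 / δ₂ := by
  set E := ∑ i ∈ Finset.Icc 1 N, ((i : ℝ) - 1) * r i with hE
  have key : ∀ i ∈ Finset.Icc 1 N, 0 ≤ ((i : ℝ) - 1) * r i := by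
    intro i hi
    have h1 : 1 ≤ i := (Finset.mem_Icc.mp hi).1
    have h1' : (1 : ℝ) ≤ (i : ℝ) := by exact_mod_cast h1
    exact mul_nonneg (by linarith) (hr i hi)
  have hδ₁' : δ₁ = ∑ i ∈ Finset.Icc 1 N, (i : ℝ) * (((i : ℝ) - 1) * r i) := by
    rw [hδ₁, hs₂, hs₁, ← Finset.sum_sub_distrib]
    exact Finset.sum_congr rfl fun i _ => by ring
  have hδ₂' : δ₂ = ∑ i ∈ Finset.Icc 1 N, ((i : ℝ)) ^ 2 * (((i : ℝ) - 1) * r i) := by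
    rw [hδ₂, hs₃, hs₂, ← Finset.sum_sub_distrib]
    exact Finset.sum_congr rfl fun i _ => by ring
  have hEnn : 0 ≤ E := Finset.sum_nonneg key
  have hδ₂nn : 0 ≤ δ₂ := by
    rw [hδ₂']
    exact Finset.sum_nonneg fun i hi => mul_nonneg (sq_nonneg _) (key i hi)
  have CS : δ₁ ^ 2 ≤ E * δ₂ := by
    have h := Finset.sum_mul_sq_le_sq_mul_sq (Finset.Icc 1 N)
      (fun i => Real.sqrt (((i : ℝ) - 1) * r i))
      (fun i => (i : ℝ) * Real.sqrt (((i : ℝ) - 1) * r i))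
    have e1 : ∑ i ∈ Finset.Icc 1 N,
        Real.sqrt (((i : ℝ) - 1) * r i) * ((i : ℝ) * Real.sqrt (((i : ℝ) - 1) * r i)) = δ₁ := by
      rw [hδ₁']
      refine Finset.sum_congr rfl fun i hi => ?_
      rw [mul_left_comm, Real.mul_self_sqrt (key i hi)]
    have e2 : ∑ i ∈ Finset.Icc 1 N, Real.sqrt (((i : ℝ) - 1) * r i) ^ 2 = E := by
      rw [hE]
      exact Finset.sum_congr rfl fun i hi => Real.sq_sqrt (key i hi)
    have e3 : ∑ i ∈ Finset.Icc 1 N, ((i : ℝ) * Real.sqrt (((i : ℝ) - 1) * r i)) ^ 2 = δ₂ := by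
      rw [hδ₂']
      refine Finset.sum_congr rfl fun i hi => ?_
      rw [mul_pow, Real.sq_sqrt (key i hi)]
    rw [e1, e2, e3] at h
    exact h
  have goal : δ₁ ^ 2 / δ₂ ≤ E := by
    rcases eq_or_lt_of_le hδ₂nn with h | h
    · have hδ₁0 : δ₁ = 0 := by nlinarith [sq_nonneg δ₁]
      simp [hδ₁0, hEnn]
    · rw [div_le_iff₀ h]; exact CS
  have hsum : ∑ i ∈ Finset.Icc 1 N, r i = s₁ - E := by
    rw [hs₁, hE, ← Finset.sum_sub_distrib]
    exact Finset.sum_congr rfl fun i _ => by ring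
  linarith
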